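/- For a prime p, integers l ≥ 1, j ≥ 1, and positive integers a_1,...,a_{l+1}, writing a_i = A_i p^j + B_i with 0 ≤ B_i < p^j and A_i ≥ 0, the p-adic valuation of the multinomial coefficient (a_1+...+a_{l+1})!/(a_1!...a_{l+1}!) is at least the sum of the p-adic valuations of the multinomial coefficients (A_1+...+A_{l+1})!/(A_1!...A_{l+1}!) and (B_1+...+B_{l+1})!/(B_1!...B_{l+1}!). -/

import Mathlib

open Finset Nat

variable {p : ℕ}

lemma dsum_split (hp : 1 < p) {j A B : ℕ} (hB : B < p ^ j) :
    (p.digits (A * p ^ j + B)).sum = (p.digits A).sum + (p.digits B).sum := by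
  rcases Nat.eq_zero_or_pos A with rfl | hA
  · simp
  have hlen : (p.digits B).length ≤ j := by
    rcases Nat.eq_zero_or_pos B with rfl | hB0
    · simp
    · rw [Nat.digits_len p B hp hB0.ne']
      exact Nat.succ_le_of_lt ((Nat.log_lt_iff_lt_pow hp hB0.ne').mpr hB)
  have h := Nat.digits_append_zeroes_append_digits (b := p) (k := j - (p.digits B).length)
      (m := A) (n := B) hp hA
  rw [Nat.add_sub_cancel' hlen] at h
  have e : A * p ^ j + B = B + p ^ j * A := by ring
  rw [e, ← h]
  simp [List.sum_append, add_comm]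

lemma padicValNat_prod' [Fact p.Prime] {ι : Type*} (s : Finset ι) (f : ι → ℕ)
    (hf : ∀ i ∈ s, f i ≠ 0) :
    padicValNat p (∏ i ∈ s, f i) = ∑ i ∈ s, padicValNat p (f i) := by
  classical
  induction s using Finset.induction_on with
  | empty => simp
  | @insert x s hx ih =>
    rw [Finset.prod_insert hx, Finset.sum_insert hx,
      padicValNat.mul (hf x (Finset.mem_insert_self x s))
        (Finset.prod_ne_zero_iff.mpr fun i hi => hf i (Finset.mem_insert_of_mem hi)),
      ih fun i hi => hf i (Finset.mem_insert_of_mem hi)]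

lemma fac_legendre [Fact p.Prime] (n : ℕ) :
    ((p : ℤ) - 1) * padicValNat p (n !) = (n : ℤ) - (p.digits n).sum := by
  have h := sub_one_mul_padicValNat_factorial (p := p) n
  have h2 : (p.digits n).sum ≤ n := Nat.digit_sum_le p n
  have hp1 : 1 ≤ p := (Fact.out : p.Prime).one_le
  have hc := congrArg (Nat.cast : ℕ → ℤ) h
  rw [Nat.cast_mul, Nat.cast_sub h2, Nat.cast_sub hp1] at hc
  simpa using hc

/-- Legendre for multinomial, in ℤ. -/
lemma key [Fact p.Prime] {ι : Type*} (s : Finset ι) (f : ι → ℕ) :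
    ((p : ℤ) - 1) * padicValNat p (Nat.multinomial s f) =
      (∑ i ∈ s, ((p.digits (f i)).sum : ℤ)) - ((p.digits (∑ i ∈ s, f i)).sum : ℤ) := by
  have hspec := Nat.multinomial_spec s f
  have hv := congrArg (padicValNat p) hspec
  rw [padicValNat.mul (Finset.prod_ne_zero_iff.mpr fun i _ => (Nat.factorial_pos _).ne')
      (Nat.multinomial_pos s f).ne',
    padicValNat_prod' s _ (fun i _ => (Nat.factorial_pos _).ne')] at hv
  have hcast := congrArg (fun n : ℕ => ((p : ℤ) - 1) * n) hv
  simp only [Nat.cast_add, Nat.cast_sum, mul_add, Finset.mul_sum] at hcast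
  simp only [fac_legendre] at hcast
  have hsum : ∑ i ∈ s, (((f i : ℤ)) - (p.digits (f i)).sum)
      = (∑ i ∈ s, (f i : ℤ)) - ∑ i ∈ s, ((p.digits (f i)).sum : ℤ) := Finset.sum_sub_distrib _ _
  rw [hsum] at hcast
  have hN : ((∑ i ∈ s, f i : ℕ) : ℤ) = ∑ i ∈ s, (f i : ℤ) := Nat.cast_sum s f
  linarith

lemma dsum_add_le [Fact p.Prime] (m n : ℕ) :
    ((p.digits (m + n)).sum : ℤ) ≤ (p.digits m).sum + (p.digits n).sum := by
  have h := Nat.choose_mul_factorial_mul_factorial (Nat.le_add_right m n)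
  rw [Nat.add_sub_cancel_left] at h
  have hv := congrArg (padicValNat p) h
  rw [padicValNat.mul (Nat.mul_ne_zero (Nat.choose_pos (Nat.le_add_right m n)).ne'
      (Nat.factorial_pos _).ne') (Nat.factorial_pos _).ne',
    padicValNat.mul (Nat.choose_pos (Nat.le_add_right m n)).ne' (Nat.factorial_pos _).ne'] at hv
  have hcast := congrArg (fun k : ℕ => ((p : ℤ) - 1) * k) hv
  simp only [Nat.cast_add, mul_add, fac_legendre] at hcast
  have hp1 : (1 : ℤ) ≤ p := by exact_mod_cast (Fact.out : p.Prime).one_le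
  have hvpos : (0 : ℤ) ≤ ((p : ℤ) - 1) * (padicValNat p ((m + n).choose m) : ℤ) :=
    mul_nonneg (by linarith) (by positivity)
  linarith

/-- Splitting each summand into high and low base-`p` parts can only decrease the total
number of carries: the `p`-adic valuation of the multinomial coefficient of the `a_i`'s is
at least the sum of those of the multinomial coefficients of the `A_i`'s and the `B_i`'s,
where `a_i = A_i p^j + B_i` with `0 ≤ B_i < p^j`. -/
theorem stmt4 (p l j : ℕ) (hp : p.Prime) (hl : 1 ≤ l) (hj : 1 ≤ j)
    (a A B : Fin (l + 1) → ℕ) (ha : ∀ i, 0 < a i)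
    (hsplit : ∀ i, a i = A i * p ^ j + B i) (hB : ∀ i, B i < p ^ j) :
    padicValNat p (Nat.multinomial univ A) + padicValNat p (Nat.multinomial univ B)
      ≤ padicValNat p (Nat.multinomial univ a) := by
  haveI : Fact p.Prime := ⟨hp⟩
  have hp1 : 1 < p := hp.one_lt
  have hpz : (1 : ℤ) < p := by exact_mod_cast hp1
  -- reduce to (p-1)-scaled inequality over ℤ
  rw [← Nat.cast_le (α := ℤ), Nat.cast_add,
    ← mul_le_mul_iff_right₀ (a := (p : ℤ) - 1) (by linarith)]
  rw [mul_add, key, key, key]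
  have hsa : ∑ i, a i = (∑ i, A i) * p ^ j + ∑ i, B i := by
    simp only [hsplit]
    rw [Finset.sum_add_distrib, Finset.sum_mul]
  have h1 : ∀ i : Fin (l + 1), ((p.digits (a i)).sum : ℤ)
      = (p.digits (A i)).sum + (p.digits (B i)).sum := by
    intro i
    rw [hsplit i, dsum_split hp1 (hB i)]
    push_cast; ring
  have h2 : ((p.digits (∑ i, a i)).sum : ℤ)
      ≤ (p.digits (∑ i, A i)).sum + (p.digits (∑ i, B i)).sum := by
    rw [hsa]
    calc ((p.digits ((∑ i, A i) * p ^ j + ∑ i, B i)).sum : ℤ)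
        ≤ (p.digits ((∑ i, A i) * p ^ j)).sum + (p.digits (∑ i, B i)).sum :=
          dsum_add_le _ _
      _ = (p.digits (∑ i, A i)).sum + (p.digits (∑ i, B i)).sum := by
          have := dsum_split (p := p) hp1 (j := j) (A := ∑ i, A i) (B := 0)
            (pow_pos (by omega) j)
          simp only [add_zero] at this
          rw [this]; simp
  have h3 : (∑ i, ((p.digits (a i)).sum : ℤ))
      = (∑ i, ((p.digits (A i)).sum : ℤ)) + ∑ i, ((p.digits (B i)).sum : ℤ) := by
    rw [← Finset.sum_add_distrib]
    exact Finset.sum_congr rfl fun i _ => h1 i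
  linarith
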